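/- Let G = ℤ₅ = ⟨x⟩. The 2-Cayley digraph Γ = Cay(G,(T_{i,j})_{2×2}) with T_{1,2} = {1, x, x⁻¹}, T_{2,1} = {x²}, T_{1,1} = T_{2,2} = ∅ is an oriented bipartite digraph with Aut(Γ) ≅ ℤ₅ acting semiregularly with orbits G×{1} and G×{2}. -/
import Mathlib

set_option maxRecDepth 100000

/-- Arc relation of the 2-Cayley digraph with `T₁₂ = S`, `T₂₁ = T`,
`T₁₁ = T₂₂ = ∅`, on vertex set `G × Fin 2`. -/
def cay2Arc {G : Type*} [Group G] (S T : Set G) (u v : G × Fin 2) : Prop :=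
  (u.2 = 0 ∧ v.2 = 1 ∧ ∃ s ∈ S, v.1 = s * u.1) ∨
    (u.2 = 1 ∧ v.2 = 0 ∧ ∃ t ∈ T, v.1 = t * u.1)

/-- The automorphism group of the digraph with arc relation `Arc`. -/
def autSubgroup {V : Type*} (Arc : V → V → Prop) : Subgroup (Equiv.Perm V) where
  carrier := {σ | ∀ u v, Arc u v ↔ Arc (σ u) (σ v)}
  one_mem' := fun _ _ => Iff.rfl
  mul_mem' := by
    intro σ τ hσ hτ u v
    simpa using (hτ u v).trans (hσ (τ u) (τ v))
  inv_mem' := by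
    intro σ hσ u v
    simpa using (hσ (σ⁻¹ u) (σ⁻¹ v)).symm

namespace Stmt15Aux

abbrev M := Multiplicative (ZMod 5)
abbrev V := M × Fin 2

def xx : M := Multiplicative.ofAdd 1

def SS : Set M := {1, xx, xx⁻¹}
def TT : Set M := {xx ^ 2}

/-- Decidable concrete version of the arc relation. -/
def D (u v : V) : Prop :=
  (u.2 = 0 ∧ v.2 = 1 ∧ (v.1 = u.1 ∨ v.1 = xx * u.1 ∨ v.1 = xx⁻¹ * u.1)) ∨
    (u.2 = 1 ∧ v.2 = 0 ∧ v.1 = xx ^ 2 * u.1)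

instance (u v : V) : Decidable (D u v) := by unfold D; infer_instance

lemma arc_iff (u v : V) : cay2Arc SS TT u v ↔ D u v := by
  unfold cay2Arc D SS TT
  simp [Set.mem_insert_iff, Set.mem_singleton_iff]

lemma mem_aut_iff (σ : Equiv.Perm V) :
    σ ∈ autSubgroup (cay2Arc SS TT) ↔ ∀ u v, D u v ↔ D (σ u) (σ v) := by
  constructor
  · intro h u v; rw [← arc_iff, ← arc_iff]; exact h u v
  · intro h u v; rw [arc_iff, arc_iff]; exact h u v

/-- lookup function -/
def lk (v0 v1 v2 v3 v4 t : ZMod 5) : ZMod 5 :=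
  if t = 0 then v0 else if t = 1 then v1 else if t = 2 then v2 else if t = 3 then v3 else v4

lemma lk_eq (g : ZMod 5 → ZMod 5) (t : ZMod 5) :
    lk (g 0) (g 1) (g 2) (g 3) (g 4) t = g t := by
  fin_cases t <;> rfl

lemma core5 : ∀ v0 v1 v2 v3 v4 : ZMod 5,
    (∀ a b : ZMod 5,
      (b = a ∨ b = 1 + a ∨ b = -1 + a) ↔
      (lk v0 v1 v2 v3 v4 b = 2 + lk v0 v1 v2 v3 v4 (a - 2) ∨
       lk v0 v1 v2 v3 v4 b = 1 + (2 + lk v0 v1 v2 v3 v4 (a - 2)) ∨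
       lk v0 v1 v2 v3 v4 b = -1 + (2 + lk v0 v1 v2 v3 v4 (a - 2)))) →
    v1 = v0 + 1 ∧ v2 = v0 + 2 ∧ v3 = v0 + 3 ∧ v4 = v0 + 4 := by decide

lemma core (g : ZMod 5 → ZMod 5)
    (h : ∀ a b : ZMod 5, (b = a ∨ b = 1 + a ∨ b = -1 + a) ↔
      (g b = 2 + g (a - 2) ∨ g b = 1 + (2 + g (a - 2)) ∨ g b = -1 + (2 + g (a - 2)))) :
    ∀ a, g a = g 0 + a := by
  have h5 := core5 (g 0) (g 1) (g 2) (g 3) (g 4) (by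
    intro a b
    rw [lk_eq g b, lk_eq g (a - 2)]
    exact h a b)
  intro a
  fin_cases a
  · exact (add_zero (g 0)).symm
  · exact h5.1
  · exact h5.2.1
  · exact h5.2.2.1
  · exact h5.2.2.2

/-- Side characterization: a vertex is on side 0 iff it has two distinct out-neighbors. -/
lemma char0 : ∀ p : V, p.2 = 0 ↔ ∃ q r : V, q ≠ r ∧ D p q ∧ D p r := by decide

lemma side0 (σ : Equiv.Perm V) (hσ : ∀ u v, D u v ↔ D (σ u) (σ v)) :
    ∀ p : V, p.2 = 0 → (σ p).2 = 0 := by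
  intro p hp
  obtain ⟨q, r, hqr, h1, h2⟩ := (char0 p).1 hp
  exact (char0 (σ p)).2 ⟨σ q, σ r, fun h => hqr (σ.injective h),
    (hσ p q).1 h1, (hσ p r).1 h2⟩

lemma side (σ : Equiv.Perm V) (hσ : ∀ u v, D u v ↔ D (σ u) (σ v)) :
    ∀ p : V, (σ p).2 = p.2 := by
  have hσinv : ∀ u v, D u v ↔ D (σ⁻¹ u) (σ⁻¹ v) := by
    intro u v
    simpa using (hσ (σ⁻¹ u) (σ⁻¹ v)).symm
  intro p
  have h2 : ∀ i : Fin 2, i ≠ 0 → i = 1 := by decide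
  by_cases hp : p.2 = 0
  · rw [side0 σ hσ p hp, hp]
  · rw [h2 _ hp]
    apply h2
    intro hc
    apply hp
    have := side0 σ⁻¹ hσinv (σ p) hc
    simpa using this

lemma arcD01 : ∀ a b : ZMod 5,
    D (Multiplicative.ofAdd a, 0) (Multiplicative.ofAdd b, 1) ↔
      (b = a ∨ b = 1 + a ∨ b = -1 + a) := by decide

lemma arcD10 : ∀ a b : ZMod 5,
    D (Multiplicative.ofAdd a, 1) (Multiplicative.ofAdd b, 0) ↔ b = 2 + a := by decide

lemma classify (σ : Equiv.Perm V) (hσ : ∀ u v, D u v ↔ D (σ u) (σ v)) :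
    ∃ c : M, ∀ p : V, σ p = (c * p.1, p.2) := by
  have hside := side σ hσ
  set g : ZMod 5 → ZMod 5 :=
    fun a => Multiplicative.toAdd ((σ (Multiplicative.ofAdd a, 1)).1) with hg
  set f : ZMod 5 → ZMod 5 :=
    fun a => Multiplicative.toAdd ((σ (Multiplicative.ofAdd a, 0)).1) with hf
  have hσ1 : ∀ a : ZMod 5, σ (Multiplicative.ofAdd a, 1) = (Multiplicative.ofAdd (g a), 1) :=
    fun a => Prod.ext rfl (hside (Multiplicative.ofAdd a, 1))
  have hσ0 : ∀ a : ZMod 5, σ (Multiplicative.ofAdd a, 0) = (Multiplicative.ofAdd (f a), 0) :=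
    fun a => Prod.ext rfl (hside (Multiplicative.ofAdd a, 0))
  -- f in terms of g
  have hfg : ∀ b : ZMod 5, f b = 2 + g (b - 2) := by
    intro b
    have harc : D (Multiplicative.ofAdd (b - 2), 1) (Multiplicative.ofAdd b, 0) := by
      rw [arcD10]; ring
    have := (hσ (Multiplicative.ofAdd (b - 2), 1) (Multiplicative.ofAdd b, 0)).1 harc
    rw [hσ1, hσ0, arcD10] at this
    exact this
  -- core hypothesis
  have hcore : ∀ a b : ZMod 5, (b = a ∨ b = 1 + a ∨ b = -1 + a) ↔
      (g b = 2 + g (a - 2) ∨ g b = 1 + (2 + g (a - 2)) ∨ g b = -1 + (2 + g (a - 2))) := by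
    intro a b
    have := hσ (Multiplicative.ofAdd a, 0) (Multiplicative.ofAdd b, 1)
    rw [hσ1, hσ0, arcD01, arcD01, hfg a] at this
    exact this
  have hg5 := core g hcore
  refine ⟨Multiplicative.ofAdd (g 0), ?_⟩
  rintro ⟨m, i⟩
  have hgm : g (Multiplicative.toAdd m) = g 0 + Multiplicative.toAdd m := hg5 _
  have hfm : f (Multiplicative.toAdd m) = g 0 + Multiplicative.toAdd m := by
    rw [hfg, hg5]; ring
  have h0 : σ (m, 0) = (Multiplicative.ofAdd (g 0) * m, 0) := by
    have h := hσ0 (Multiplicative.toAdd m)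
    rw [hfm] at h
    exact h
  have h1 : σ (m, 1) = (Multiplicative.ofAdd (g 0) * m, 1) := by
    have h := hσ1 (Multiplicative.toAdd m)
    rw [hgm] at h
    exact h
  fin_cases i
  · exact h0
  · exact h1

/-- Translation automorphisms. -/
def tr (c : M) : Equiv.Perm V := (Equiv.mulLeft c).prodCongr (Equiv.refl _)

lemma tr_apply (c : M) (p : V) : tr c p = (c * p.1, p.2) := rfl

lemma D_tr : ∀ (c : M) (u v : V), D u v ↔ D (c * u.1, u.2) (c * v.1, v.2) := by decide

lemma tr_mem (c : M) : tr c ∈ autSubgroup (cay2Arc SS TT) := by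
  rw [mem_aut_iff]
  intro u v
  rw [tr_apply, tr_apply]
  exact D_tr c u v

/-- The homomorphism from `ℤ₅` to the automorphism group. -/
def φ : M →* autSubgroup (cay2Arc SS TT) where
  toFun c := ⟨tr c, tr_mem c⟩
  map_one' := Subtype.ext (Equiv.ext fun p => by
    rw [show ((⟨tr 1, tr_mem 1⟩ : autSubgroup (cay2Arc SS TT)) : Equiv.Perm V) p = tr 1 p from rfl,
      tr_apply, one_mul]
    rfl)
  map_mul' c d := Subtype.ext (Equiv.ext fun p => by
    show tr (c * d) p = tr c (tr d p)
    rw [tr_apply, tr_apply, tr_apply]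
    show ((c * d) * p.1, p.2) = (c * (d * p.1), p.2)
    rw [mul_assoc])

lemma φ_bij : Function.Bijective φ := by
  constructor
  · intro c d h
    have h2 : tr c (1, 0) = tr d (1, 0) := by
      have := congrArg (fun σ : autSubgroup (cay2Arc SS TT) => (σ : Equiv.Perm V) (1, 0)) h
      exact this
    rw [tr_apply, tr_apply] at h2
    have := congrArg Prod.fst h2
    simpa using this
  · rintro ⟨σ, hσ⟩
    obtain ⟨c, hc⟩ := classify σ ((mem_aut_iff σ).1 hσ)
    refine ⟨c, Subtype.ext (Equiv.ext fun p => ?_)⟩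
    show tr c p = σ p
    rw [tr_apply, hc p]

lemma semiregular : ∀ σ ∈ autSubgroup (cay2Arc SS TT), (∃ p, σ p = p) → σ = 1 := by
  rintro σ hσ ⟨p, hp⟩
  obtain ⟨c, hc⟩ := classify σ ((mem_aut_iff σ).1 hσ)
  have h1 : c * p.1 = p.1 := congrArg Prod.fst ((hc p).symm.trans hp)
  have hc1 : c = 1 := by
    have : c * p.1 = 1 * p.1 := by rw [h1, one_mul]
    exact mul_right_cancel this
  exact Equiv.ext fun q => by rw [hc q, hc1, one_mul]; rfl

lemma transitive : ∀ (g h : M) (i : Fin 2),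
    ∃ σ ∈ autSubgroup (cay2Arc SS TT), σ (g, i) = (h, i) := by
  intro g h i
  refine ⟨tr (h * g⁻¹), tr_mem _, ?_⟩
  rw [tr_apply]
  simp

lemma disjoint : SS ∩ TT⁻¹ = ∅ := by
  rw [Set.eq_empty_iff_forall_notMem]
  rintro s ⟨h1, h2⟩
  rw [SS, Set.mem_insert_iff, Set.mem_insert_iff, Set.mem_singleton_iff] at h1
  rw [Set.mem_inv, TT, Set.mem_singleton_iff] at h2
  revert h1 h2
  revert s
  decide

end Stmt15Aux

/-- The 2-Cayley digraph of `ℤ₅` with `T₁₂ = {1, x, x⁻¹}`, `T₂₁ = {x²}` is an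
oriented bipartite digraph whose automorphism group is `ℤ₅` acting
semiregularly with the two orbits `G × {1}`, `G × {2}`. -/
theorem stmt_15 :
    let x : Multiplicative (ZMod 5) := Multiplicative.ofAdd 1
    let S : Set (Multiplicative (ZMod 5)) := {1, x, x⁻¹}
    let T : Set (Multiplicative (ZMod 5)) := {x ^ 2}
    let Arc := cay2Arc S T
    S ∩ T⁻¹ = ∅ ∧
      Nonempty (autSubgroup Arc ≃* Multiplicative (ZMod 5)) ∧
      (∀ σ ∈ autSubgroup Arc, (∃ p, σ p = p) → σ = 1) ∧
      (∀ σ ∈ autSubgroup Arc, ∀ p : Multiplicative (ZMod 5) × Fin 2,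
        (σ p).2 = p.2) ∧
      (∀ (g h : Multiplicative (ZMod 5)) (i : Fin 2),
        ∃ σ ∈ autSubgroup Arc, σ (g, i) = (h, i)) := by
  refine ⟨Stmt15Aux.disjoint, ⟨(MulEquiv.ofBijective Stmt15Aux.φ Stmt15Aux.φ_bij).symm⟩,
    Stmt15Aux.semiregular, ?_, Stmt15Aux.transitive⟩
  intro σ hσ p
  exact Stmt15Aux.side σ ((Stmt15Aux.mem_aut_iff σ).1 hσ) p
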